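/- Every run r^C obtained from a chain C of bundles in a strand space satisfies MP2: for every event recv(u) appearing in r^C_a(m), there exists an agent b such that sent(u) appears in r^C_b(m). -/

import Mathlib

namespace StrandPaper

/-- A strand space over a message set `M`: a type of strands, each with a trace,
a finite sequence of signed terms.  A signed term `(true, u)` is `+u` (send) and
`(false, u)` is `-u` (receive). -/
structure StrandSpace (M : Type) where
  Strand : Type
  tr : Strand → List (Bool × M)

namespace StrandSpace

variable {M α : Type}

/-- Nodes are pairs of a strand and a (1-based) index. -/
abbrev Node (S : StrandSpace M) : Type := S.Strand × ℕ

/-- The signed term at a node (if the index is valid). -/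
def term (S : StrandSpace M) (n : S.Node) : Option (Bool × M) := (S.tr n.1)[n.2 - 1]?

def IsNode (S : StrandSpace M) (n : S.Node) : Prop := 1 ≤ n.2 ∧ n.2 ≤ (S.tr n.1).length

/-- `n1 → n2`: `term n1 = +u` and `term n2 = -u`. -/
def SendsTo (S : StrandSpace M) (n1 n2 : S.Node) : Prop :=
  ∃ u, S.term n1 = some (true, u) ∧ S.term n2 = some (false, u)

/-- `n1 ⇒ n2`: consecutive nodes of the same strand. -/
def SuccEdge (S : StrandSpace M) (n1 n2 : S.Node) : Prop :=
  n2.1 = n1.1 ∧ n2.2 = n1.2 + 1 ∧ S.IsNode n1 ∧ S.IsNode n2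

/-- A (possibly infinite) bundle: a subgraph of `(N, → ∪ ⇒)` satisfying B2–B4:
every negative node has a unique incoming `→` edge, `⇒`-downward closure and
acyclicity. -/
structure Bundle (S : StrandSpace M) where
  nodes : Set S.Node
  comm : S.Node → S.Node → Prop
  nodes_valid : ∀ n ∈ nodes, S.IsNode n
  comm_mem : ∀ n1 n2, comm n1 n2 → n1 ∈ nodes ∧ n2 ∈ nodes ∧ S.SendsTo n1 n2
  recv_unique : ∀ n2 ∈ nodes, ∀ u, S.term n2 = some (false, u) → ∃! n1, comm n1 n2
  succ_closed : ∀ n1 n2, S.SuccEdge n1 n2 → n2 ∈ nodes → n1 ∈ nodes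
  acyclic : ∀ n, ¬ Relation.TransGen
      (fun m1 m2 => comm m1 m2 ∨ (S.SuccEdge m1 m2 ∧ m1 ∈ nodes ∧ m2 ∈ nodes)) n n

variable {S : StrandSpace M}

/-- The causal edges (`→` or `⇒`) of a bundle. -/
def Bundle.edge (B : S.Bundle) (n1 n2 : S.Node) : Prop :=
  B.comm n1 n2 ∨ (S.SuccEdge n1 n2 ∧ n1 ∈ B.nodes ∧ n2 ∈ B.nodes)

/-- A causal path in a bundle. -/
def Bundle.CausalPath (B : S.Bundle) (l : List S.Node) : Prop :=
  l.Chain' B.edge ∧ ∀ n ∈ l, n ∈ B.nodes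

/-- The height of the bundle is at most `k`: every causal path has at most `k+1` nodes
(i.e. length at most `k`). -/
def Bundle.HeightLE (B : S.Bundle) (k : ℕ) : Prop :=
  ∀ l, B.CausalPath l → l.length ≤ k + 1

def Bundle.FiniteHeight (B : S.Bundle) : Prop := ∃ k, B.HeightLE k

noncomputable def Bundle.height (B : S.Bundle) : ℕ := sInf {k | B.HeightLE k}

/-- The height of a strand in a bundle: the largest `i` with `⟨s,i⟩ ∈ B` (0 if none). -/
noncomputable def Bundle.strandHeight (B : S.Bundle) (s : S.Strand) : ℕ :=
  sSup {i | (s, i) ∈ B.nodes}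

/-- The empty bundle. -/
def emptyBundle (S : StrandSpace M) : S.Bundle where
  nodes := ∅
  comm := fun _ _ => False
  nodes_valid := fun n hn => absurd hn (Set.notMem_empty n)
  comm_mem := fun _ _ h => h.elim
  recv_unique := fun n hn => absurd hn (Set.notMem_empty n)
  succ_closed := fun _ n2 _ h => absurd h (Set.notMem_empty n2)
  acyclic := by
    intro n h
    cases h with
    | single h1 => rcases h1 with h1 | ⟨_, h3, _⟩
                   · exact h1
                   · exact h3
    | tail _ h1 => rcases h1 with h1 | ⟨_, h3, _⟩
                   · exact h1
                   · exact h3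

/-- `B1 ⊑_f B2`: `f` maps each strand prefix in `B1` into `B2`, preserving terms
and `→` edges. -/
def Embeds (f : S.Strand ≃ S.Strand) (B1 B2 : S.Bundle) : Prop :=
  (∀ s i, (s, i) ∈ B1.nodes → (f s, i) ∈ B2.nodes ∧ S.term (s, i) = S.term (f s, i)) ∧
  (∀ s i s' j, B1.comm (s, i) (s', j) → B2.comm (f s, i) (f s', j))

/-- `B1 ↦ B2` via the agent-respecting bijection `f`: `B1 ⊑_f B2` and, for each
agent, at most one of its strands is extended, by at most (exactly) one node. -/
def StepVia (A : S.Strand → α) (f : S.Strand ≃ S.Strand) (B1 B2 : S.Bundle) : Prop :=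
  (∀ s, A (f s) = A s) ∧ Embeds f B1 B2 ∧
  ∀ s s', A s = A s' →
    B2.strandHeight (f s) ≠ B1.strandHeight s →
    B2.strandHeight (f s') ≠ B1.strandHeight s' →
    s = s' ∧ B2.strandHeight (f s) = B1.strandHeight s + 1

/-- `B1 ↦ B2`. -/
def Step (A : S.Strand → α) (B1 B2 : S.Bundle) : Prop := ∃ f, StepVia A f B1 B2

/-- A chain `B_0 ↦ B_1 ↦ ⋯` starting from the empty bundle. -/
structure Chain (A : S.Strand → α) where
  B : ℕ → S.Bundle
  init : B 0 = emptyBundle S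
  step : ∀ k, Step A (B k) (B (k + 1))

/-- The event (if any) performed by agent `a` in the step `B1 ↦ B2`:
the term of the single new node on a strand of `a`. -/
noncomputable def stepEvent (A : S.Strand → α) (B1 B2 : S.Bundle) (a : α) :
    Option (Bool × M) := by
  classical
  exact if h : ∃ p : (S.Strand ≃ S.Strand) × S.Strand,
      StepVia A p.1 B1 B2 ∧ A p.2 = a ∧
      B2.strandHeight (p.1 p.2) = B1.strandHeight p.2 + 1 then
    S.term (h.choose.1 h.choose.2, B2.strandHeight (h.choose.1 h.choose.2))
  else none

/-- The history of agent `a` at time `m` along a chain. -/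
noncomputable def Chain.hist {A : S.Strand → α} (C : Chain (S := S) A) (a : α) :
    ℕ → List (Bool × M)
  | 0 => []
  | m + 1 => C.hist a m ++ (stepEvent A (C.B m) (C.B (m + 1)) a).toList

end StrandSpace

/-- A run: a local state (history of events) for each agent at each time.
`(true, u)` is `sent(u)` and `(false, u)` is `recv(u)`. -/
def Run (α M : Type) := ℕ → α → List (Bool × M)

variable {M α : Type}

/-- MP1–MP3 with respect to generating history sets `V`. -/
def MP (V : α → Set (List (Bool × M))) (r : Run α M) : Prop :=
  (∀ a m, r m a ∈ V a) ∧
  (∀ a m u, (false, u) ∈ r m a → ∃ b, (true, u) ∈ r m b) ∧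
  (∀ a, r 0 a = []) ∧
  (∀ a m, r (m + 1) a = r m a ∨ ∃ e, r (m + 1) a = r m a ++ [e])

/-- The strand system generated by history sets `V`: all runs satisfying MP1–3. -/
def generated (V : α → Set (List (Bool × M))) : Set (Run α M) := {r | MP V r}

def IsStrandSystem (R : Set (Run α M)) : Prop :=
  ∃ V : α → Set (List (Bool × M)), R = generated V

/-- The run associated with a chain. -/
noncomputable def StrandSpace.Chain.run {S : StrandSpace M} {A : S.Strand → α}
    (C : StrandSpace.Chain (S := S) A) : Run α M := fun m a => C.hist a m

/-- `R(Σ, A, A)`: the translation of the strand space `S` under agent assignment `A`. -/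
def systemOf (S : StrandSpace M) (A : S.Strand → α) : Set (Run α M) :=
  {r | ∃ C : StrandSpace.Chain (S := S) A, C.run = r}

end StrandPaper

open StrandPaper StrandPaper.StrandSpace

section Aux

variable {M α : Type} {S : StrandSpace M}

lemma aux_bddAbove (B : S.Bundle) (s : S.Strand) :
    BddAbove {i | (s, i) ∈ B.nodes} := by
  refine ⟨(S.tr s).length, fun i hi => ?_⟩
  exact (B.nodes_valid _ hi).2

lemma aux_mem_of_le {B : S.Bundle} {s : S.Strand} {i j : ℕ}
    (hi : 1 ≤ i) (hij : i ≤ j) (hj : (s, j) ∈ B.nodes) : (s, i) ∈ B.nodes := by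
  induction j with
  | zero => omega
  | succ j ih =>
    rcases Nat.eq_or_lt_of_le hij with h | h
    · exact h ▸ hj
    · have hj1 : 1 ≤ j := by omega
      have hvalid := B.nodes_valid _ hj
      have hmem : (s, j) ∈ B.nodes := by
        refine B.succ_closed (s, j) (s, j + 1) ⟨rfl, rfl, ⟨hj1, ?_⟩, hvalid⟩ hj
        show j ≤ (S.tr s).length
        have h2 : j + 1 ≤ (S.tr s).length := hvalid.2
        omega
      exact ih (by omega) hmem

lemma aux_le_height {B : S.Bundle} {s : S.Strand} {i : ℕ}
    (h : (s, i) ∈ B.nodes) : i ≤ B.strandHeight s :=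
  le_csSup (aux_bddAbove B s) h

lemma aux_mem_of_le_height {B : S.Bundle} {s : S.Strand} {i : ℕ}
    (hi : 1 ≤ i) (hle : i ≤ B.strandHeight s) : (s, i) ∈ B.nodes := by
  have hne : {j | (s, j) ∈ B.nodes}.Nonempty := by
    by_contra hne
    rw [Set.not_nonempty_iff_eq_empty] at hne
    have h0 : B.strandHeight s = 0 := by
      simp [Bundle.strandHeight, hne]
    rw [h0] at hle
    omega
  have hmem : B.strandHeight s ∈ {j | (s, j) ∈ B.nodes} :=
    Nat.sSup_mem hne (aux_bddAbove B s)
  exact aux_mem_of_le hi hle hmem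

lemma aux_hist_mono {A : S.Strand → α} (C : Chain (S := S) A) (a : α)
    {t : Bool × M} {k m : ℕ} (hkm : k ≤ m) (h : t ∈ C.hist a k) :
    t ∈ C.hist a m := by
  induction m with
  | zero => exact Nat.le_zero.mp hkm ▸ h
  | succ m ih =>
    rcases Nat.eq_or_lt_of_le hkm with h' | h'
    · exact h' ▸ h
    · have := ih (by omega)
      rw [Chain.hist]
      exact List.mem_append_left _ this

/-- Key invariant: the term of every node of `C.B k` occurs in the history of the
agent of its strand at time `k`. -/
lemma aux_term_mem_hist {A : S.Strand → α} (C : Chain (S := S) A) :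
    ∀ k, ∀ n ∈ (C.B k).nodes, ∀ t, S.term n = some t → t ∈ C.hist (A n.1) k := by
  intro k
  induction k with
  | zero =>
    intro n hn
    rw [C.init] at hn
    exact absurd hn (Set.notMem_empty n)
  | succ k ih =>
    intro n hn t ht
    obtain ⟨f, hA, hEmb, huniq⟩ := C.step k
    -- write n = (f s, i)
    obtain ⟨σ, i⟩ := n
    set s := f.symm σ with hs
    have hfs : f s = σ := f.apply_symm_apply σ
    have hi1 : 1 ≤ i := (((C.B (k + 1)).nodes_valid _ hn)).1
    by_cases hcase : i ≤ (C.B k).strandHeight s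
    · -- old node
      have hmem : (s, i) ∈ (C.B k).nodes := aux_mem_of_le_height hi1 hcase
      obtain ⟨_, hterm⟩ := hEmb.1 s i hmem
      rw [hfs] at hterm
      have := ih (s, i) hmem t (by rw [hterm]; exact ht)
      have hAs : A s = A σ := by rw [← hfs, hA]
      rw [← hAs] at *
      exact aux_hist_mono C (A s) (Nat.le_succ k) this
    · -- new node
      push_neg at hcase
      have hle2 : i ≤ (C.B (k + 1)).strandHeight σ := aux_le_height hn
      have hne : (C.B (k + 1)).strandHeight (f s) ≠ (C.B k).strandHeight s := by
        rw [hfs]; omega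
      have hplus := (huniq s s rfl hne hne).2
      have hieq : i = (C.B k).strandHeight s + 1 := by
        rw [hfs] at hplus; omega
      have hAs : A σ = A s := by rw [← hfs, hA]
      -- the existence condition of stepEvent holds for agent A σ
      have hcond : ∃ p : (S.Strand ≃ S.Strand) × S.Strand,
          StepVia A p.1 (C.B k) (C.B (k + 1)) ∧ A p.2 = A σ ∧
          (C.B (k + 1)).strandHeight (p.1 p.2) = (C.B k).strandHeight p.2 + 1 := by
        exact ⟨(f, s), ⟨hA, hEmb, huniq⟩, hAs.symm, hplus⟩
      -- unfold the event at this step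
      rw [Chain.hist]
      rw [stepEvent, dif_pos hcond]
      set p := hcond.choose with hp
      obtain ⟨⟨hA', hEmb', huniq'⟩, hAp, hHp⟩ := hcond.choose_spec
      rw [← hp] at hA' hEmb' huniq' hAp hHp
      -- compare the chosen witness's new strand with ours
      set t₀ := p.1.symm (f s) with ht₀
      have hft₀ : p.1 t₀ = f s := p.1.apply_symm_apply (f s)
      have hAt₀ : A t₀ = A σ := by
        rw [← hA' t₀, hft₀, hfs]
      by_cases hch : (C.B (k + 1)).strandHeight (p.1 t₀) = (C.B k).strandHeight t₀
      · -- strand t₀ not extended by p.1: node already present in `C.B k`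
        have hht₀ : i ≤ (C.B k).strandHeight t₀ := by
          rw [← hch, hft₀, hfs]; exact hle2
        have hmem : (t₀, i) ∈ (C.B k).nodes := aux_mem_of_le_height hi1 hht₀
        obtain ⟨_, hterm⟩ := hEmb'.1 t₀ i hmem
        rw [hft₀, hfs] at hterm
        have := ih (t₀, i) hmem t (by rw [hterm]; exact ht)
        rw [hAt₀] at this
        exact List.mem_append_left _ this
      · -- then t₀ = p.2 and the recorded event is exactly the term of n
        have hne' : (C.B (k + 1)).strandHeight (p.1 p.2) ≠ (C.B k).strandHeight p.2 := by
          omega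
        have heq := (huniq' t₀ p.2 (by rw [hAt₀, hAp]) hch hne').1
        have hnode : p.1 p.2 = σ := by rw [← heq, hft₀, hfs]
        have hht : (C.B (k + 1)).strandHeight (p.1 p.2) = i := by
          rw [hnode]
          rw [hfs] at hplus
          omega
        refine List.mem_append_right _ ?_
        rw [hht, hnode, ht]
        simp

end Aux

/-- Every run obtained from a chain of bundles satisfies MP2: for every
`recv(u)` in agent `a`'s history at time `m`, some agent `b` has `sent(u)` in its
history at time `m`. -/
theorem chain_run_satisfies_MP2 {M α : Type} {S : StrandSpace M} {A : S.Strand → α}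
    (C : Chain (S := S) A) (a : α) (m : ℕ) (u : M)
    (h : (false, u) ∈ C.hist a m) : ∃ b : α, (true, u) ∈ C.hist b m := by
  induction m with
  | zero => simp [Chain.hist] at h
  | succ m ih =>
    rw [Chain.hist] at h
    rcases List.mem_append.mp h with h | h
    · obtain ⟨b, hb⟩ := ih h
      exact ⟨b, aux_hist_mono C b (Nat.le_succ m) hb⟩
    · -- the event at this step is recv(u): the term of a node of `C.B (m+1)`
      have hev : stepEvent A (C.B m) (C.B (m + 1)) a = some (false, u) := by
        cases hse : stepEvent A (C.B m) (C.B (m + 1)) a with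
        | none => rw [hse] at h; simp at h
        | some e => rw [hse] at h; simp at h; rw [h]
      rw [stepEvent] at hev
      split at hev
      case isFalse => simp at hev
      case isTrue hcond =>
        set p := hcond.choose with hp
        obtain ⟨⟨hA', hEmb', huniq'⟩, hAp, hHp⟩ := hcond.choose_spec
        rw [← hp] at hA' hEmb' huniq' hAp hHp
        set n2 : S.Node := (p.1 p.2, (C.B (m + 1)).strandHeight (p.1 p.2)) with hn2
        have hn2mem : n2 ∈ (C.B (m + 1)).nodes := by
          apply aux_mem_of_le_height (by omega) le_rfl
        obtain ⟨n1, hcomm⟩ := ((C.B (m + 1)).recv_unique n2 hn2mem u hev).exists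
        obtain ⟨hn1mem, _, u', hsend, hrecv⟩ := (C.B (m + 1)).comm_mem n1 n2 hcomm
        have huu : u = u' := by
          rw [hev] at hrecv
          exact (Prod.mk.injEq _ _ _ _).mp (Option.some.inj hrecv) |>.2
        refine ⟨A n1.1, ?_⟩
        exact aux_term_mem_hist C (m + 1) n1 hn1mem (true, u)
          (by rw [hsend, ← huu])
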